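/- For every nonnegative integer n, the number of integer triangles with perimeter p = 12n + 10 is T(12n+10) = 3n² + 5n + 2. -/

import Mathlib

/-- `T p` is the number of integer triangles with perimeter `p`:
unordered triples of positive integers `a ≤ b ≤ c` with `a + b + c = p`
and `c < a + b`. -/
noncomputable def T (p : ℕ) : ℕ :=
  Nat.card {t : ℕ × ℕ × ℕ //
    0 < t.1 ∧ t.1 ≤ t.2.1 ∧ t.2.1 ≤ t.2.2 ∧ t.2.2 < t.1 + t.2.1 ∧ t.1 + t.2.1 + t.2.2 = p}

theorem integer_triangles_perimeter_12n_plus_10 (n : ℕ) :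
    T (12 * n + 10) = 3 * n ^ 2 + 5 * n + 2 := by
  set p := 12 * n + 10 with hp
  -- The finset of triangle triples
  set Sfin : Finset (ℕ × ℕ × ℕ) :=
    (Finset.range (p + 1) ×ˢ Finset.range (p + 1) ×ˢ Finset.range (p + 1)).filter
      (fun t => 0 < t.1 ∧ t.1 ≤ t.2.1 ∧ t.2.1 ≤ t.2.2 ∧ t.2.2 < t.1 + t.2.1 ∧
        t.1 + t.2.1 + t.2.2 = p) with hS
  -- Step A : T p = Sfin.card
  have hA : T p = Sfin.card := by
    rw [T]
    have e : {t : ℕ × ℕ × ℕ //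
        0 < t.1 ∧ t.1 ≤ t.2.1 ∧ t.2.1 ≤ t.2.2 ∧ t.2.2 < t.1 + t.2.1 ∧
          t.1 + t.2.1 + t.2.2 = p} ≃ {t : ℕ × ℕ × ℕ // t ∈ Sfin} := by
      apply Equiv.subtypeEquivRight
      intro t
      simp only [hS, Finset.mem_filter, Finset.mem_product, Finset.mem_range]
      constructor
      · rintro ⟨h1, h2, h3, h4, h5⟩
        exact ⟨⟨by omega, by omega, by omega⟩, h1, h2, h3, h4, h5⟩
      · rintro ⟨-, h⟩; exact h
    rw [Nat.card_congr e, Nat.card_eq_fintype_card, Fintype.card_coe]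
  -- Step B : bijection with lattice points under a line
  set B : Finset (ℕ × ℕ) :=
    (Finset.range (2 * n + 2) ×ˢ Finset.range (3 * n + 2)).filter
      (fun x => 3 * x.1 + 2 * x.2 ≤ 6 * n + 2) with hB
  have hAB : Sfin.card = B.card := by
    apply Finset.card_nbij' (i := fun t => (6 * n + 4 - t.2.2, t.2.2 - t.2.1))
      (j := fun x => (2 * x.1 + x.2 + 2, 6 * n + 4 - x.1 - x.2, 6 * n + 4 - x.1))
    · rintro ⟨a, b, c⟩ ht
      simp only [hS, Finset.mem_filter, Finset.mem_product, Finset.mem_range, Finset.mem_coe] at ht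
      simp only [hB, Finset.mem_filter, Finset.mem_product, Finset.mem_range, Finset.mem_coe]
      omega
    · rintro ⟨z, d⟩ hx
      simp only [hB, Finset.mem_filter, Finset.mem_product, Finset.mem_range, Finset.mem_coe] at hx
      simp only [hS, Finset.mem_filter, Finset.mem_product, Finset.mem_range, Finset.mem_coe]
      omega
    · rintro ⟨a, b, c⟩ ht
      simp only [hS, Finset.mem_filter, Finset.mem_product, Finset.mem_range, Finset.mem_coe] at ht
      simp only [Prod.mk.injEq]
      omega
    · rintro ⟨z, d⟩ hx
      simp only [hB, Finset.mem_filter, Finset.mem_product, Finset.mem_range, Finset.mem_coe] at hx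
      simp only [Prod.mk.injEq]
      omega
  -- Step C : fold the triangle of lattice points into a rectangle
  set R : Finset (ℕ × ℕ) := Finset.range (n + 1) ×ˢ Finset.range (3 * n + 2) with hR
  have hsplitB := Finset.card_filter_add_card_filter_not
    (s := B) (p := fun x => x.1 ≤ n)
  have hsplitR := Finset.card_filter_add_card_filter_not
    (s := R) (p := fun x => 3 * x.1 + 2 * x.2 ≤ 6 * n + 2)
  have h1 : B.filter (fun x => x.1 ≤ n) = R.filter (fun x => 3 * x.1 + 2 * x.2 ≤ 6 * n + 2) := by
    ext ⟨z, d⟩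
    simp only [hB, hR, Finset.mem_filter, Finset.mem_product, Finset.mem_range]
    omega
  have h2 : (B.filter (fun x => ¬ x.1 ≤ n)).card =
      (R.filter (fun x => ¬ 3 * x.1 + 2 * x.2 ≤ 6 * n + 2)).card := by
    apply Finset.card_nbij' (i := fun x => (2 * n + 1 - x.1, 3 * n + 1 - x.2))
      (j := fun x => (2 * n + 1 - x.1, 3 * n + 1 - x.2))
    · rintro ⟨z, d⟩ hx
      simp only [hB, Finset.mem_filter, Finset.mem_product, Finset.mem_range, Finset.mem_coe] at hx
      simp only [hR, Finset.mem_filter, Finset.mem_product, Finset.mem_range, Finset.mem_coe]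
      omega
    · rintro ⟨z, d⟩ hx
      simp only [hR, Finset.mem_filter, Finset.mem_product, Finset.mem_range, Finset.mem_coe] at hx
      simp only [hB, Finset.mem_filter, Finset.mem_product, Finset.mem_range, Finset.mem_coe]
      omega
    · rintro ⟨z, d⟩ hx
      simp only [hB, Finset.mem_filter, Finset.mem_product, Finset.mem_range, Finset.mem_coe] at hx
      simp only [Prod.mk.injEq]
      omega
    · rintro ⟨z, d⟩ hx
      simp only [hR, Finset.mem_filter, Finset.mem_product, Finset.mem_range, Finset.mem_coe] at hx
      simp only [Prod.mk.injEq]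
      omega
  have hRcard : R.card = (n + 1) * (3 * n + 2) := by
    rw [hR, Finset.card_product, Finset.card_range, Finset.card_range]
  have h1' := congrArg Finset.card h1
  have : B.card = (n + 1) * (3 * n + 2) := by omega
  rw [hA, hAB, this]; ring
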